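/- Let F ⊆ ℝ^d be a nonempty compact convex set and suppose B(v, r) is the (unique) minimum-volume closed Euclidean ball containing F. Then v ∈ F. -/

import Mathlib

theorem stmt_10 (d : ℕ) (F : Set (EuclideanSpace ℝ (Fin d)))
    (hne : F.Nonempty) (hcpt : IsCompact F) (hconv : Convex ℝ F)
    (v : EuclideanSpace ℝ (Fin d)) (r : ℝ) (hr : 0 ≤ r)
    (hsub : F ⊆ Metric.closedBall v r)
    (hmin : ∀ (v' : EuclideanSpace ℝ (Fin d)) (r' : ℝ),
      F ⊆ Metric.closedBall v' r' → r ≤ r') :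
    v ∈ F := by
  by_contra hv
  obtain ⟨p, hpF, hp⟩ := exists_norm_eq_iInf_of_complete_convex hne hcpt.isComplete hconv v
  rw [norm_eq_iInf_iff_real_inner_le_zero hconv hpF] at hp
  set δ : ℝ := ‖v - p‖ with hδdef
  have hδpos : 0 < δ := by
    rw [hδdef, norm_pos_iff, sub_ne_zero]
    rintro rfl; exact hv hpF
  have key : ∀ x ∈ F, ‖x - p‖ ^ 2 ≤ r ^ 2 - δ ^ 2 := by
    intro x hx
    have h1 : (inner ℝ (v - p) (x - p) : ℝ) ≤ 0 := hp x hx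
    have h2 : ‖x - v‖ ≤ r := by
      have := hsub hx
      rwa [Metric.mem_closedBall, dist_eq_norm] at this
    have h3 : x - p = (x - v) + (v - p) := by abel
    have h4 : ‖x - p‖ ^ 2 = ‖x - v‖ ^ 2 + 2 * (inner ℝ (x - v) (v - p) : ℝ) + ‖v - p‖ ^ 2 := by
      rw [h3, norm_add_sq_real]
    have h5 : (inner ℝ (x - v) (v - p) : ℝ) = (inner ℝ (x - p) (v - p) : ℝ) - ‖v - p‖ ^ 2 := by
      have : x - v = (x - p) - (v - p) := by abel
      rw [this, inner_sub_left, real_inner_self_eq_norm_sq]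
    have h6 : (inner ℝ (x - p) (v - p) : ℝ) ≤ 0 := by rw [real_inner_comm]; exact h1
    have h7 : ‖x - v‖ ^ 2 ≤ r ^ 2 := by
      apply sq_le_sq' _ h2
      linarith [norm_nonneg (x - v)]
    calc ‖x - p‖ ^ 2 = ‖x - v‖ ^ 2 + 2 * ((inner ℝ (x - p) (v - p) : ℝ) - ‖v - p‖ ^ 2) + ‖v - p‖ ^ 2 := by
          rw [h4, h5]
      _ ≤ r ^ 2 - δ ^ 2 := by rw [← hδdef]; nlinarith
  have hnn : 0 ≤ r ^ 2 - δ ^ 2 := by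
    obtain ⟨x, hx⟩ := hne
    have := key x hx
    nlinarith [sq_nonneg (‖x - p‖)]
  have hsub' : F ⊆ Metric.closedBall p (Real.sqrt (r ^ 2 - δ ^ 2)) := by
    intro x hx
    rw [Metric.mem_closedBall, dist_eq_norm]
    rw [show Real.sqrt (r ^ 2 - δ ^ 2) = Real.sqrt (r ^ 2 - δ ^ 2) from rfl]
    have := key x hx
    exact (Real.le_sqrt (norm_nonneg _) hnn).mpr this
  have hle := hmin p _ hsub'
  have : r ^ 2 ≤ r ^ 2 - δ ^ 2 := (Real.le_sqrt hr hnn).mp hle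
  nlinarith
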